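/- Let T ∈ (0,∞], let F : [0,T) → ℝ be continuous, and let t₀ ∈ [0,T). Then there exists c < 0 with the following property: every C² function φ : [0,T) → ℝ satisfying φ''(t) = F(t) φ(t) on [0,T), φ(t₀) > 0, and φ'(t₀)/φ(t₀) < c vanishes somewhere after t₀, i.e., φ(t*) = 0 for some t* ∈ (t₀, T). -/

import Mathlib

open Set
open Real

/-- a sufficiently negative initial logarithmic derivative forces a
solution of φ'' = Fφ to vanish in finite time. -/
theorem stmt_8 (T : EReal) (hT : 0 < T)
    (J : Set ℝ) (hJ : J = {t : ℝ | 0 ≤ t ∧ (t : EReal) < T})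
    (F : ℝ → ℝ) (hF : ContinuousOn F J)
    (t₀ : ℝ) (ht₀ : t₀ ∈ J) :
    ∃ c : ℝ, c < 0 ∧ ∀ φ φ' : ℝ → ℝ,
      (∀ t ∈ J, HasDerivWithinAt φ (φ' t) J t) →
      (∀ t ∈ J, HasDerivWithinAt φ' (F t * φ t) J t) →
      0 < φ t₀ → φ' t₀ / φ t₀ < c →
      ∃ ts ∈ J, t₀ < ts ∧ φ ts = 0 := by
  subst hJ
  obtain ⟨ht₀0, ht₀T⟩ := ht₀
  -- find a real b with t₀ < b and (b : EReal) ≤ T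
  obtain ⟨x, hx1, hx2⟩ := exists_between ht₀T
  have hxbot : x ≠ ⊥ := by rintro rfl; exact lt_asymm (EReal.bot_lt_coe t₀) hx1
  have hxtop : x ≠ ⊤ := by rintro rfl; exact (not_top_lt hx2)
  set b := x.toReal with hbdef
  have hbx : (b : EReal) = x := EReal.coe_toReal hxtop hxbot
  have hbT : (b : EReal) ≤ T := hbx ▸ hx2.le
  have ht₀b : t₀ < b := by
    rw [← EReal.coe_lt_coe_iff]; rw [hbx]; exact hx1
  set b' : ℝ := (t₀ + b) / 2 with hb'def
  have ht₀b' : t₀ < b' := by simp [hb'def]; linarith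
  have hb'b : b' < b := by simp [hb'def]; linarith
  set K : Set ℝ := Icc t₀ b' with hKdef
  have hKJ : K ⊆ {t : ℝ | 0 ≤ t ∧ (t : EReal) < T} := by
    intro s hs
    refine ⟨le_trans ht₀0 hs.1, ?_⟩
    have hsb : s < b := lt_of_le_of_lt hs.2 hb'b
    exact lt_of_lt_of_le (EReal.coe_lt_coe_iff.2 hsb) hbT
  obtain ⟨M₀, hM₀⟩ := isCompact_Icc.exists_bound_of_continuousOn (hF.mono hKJ)
  set M : ℝ := max M₀ 0 with hMdef
  have hM : 0 ≤ M := le_max_right _ _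
  have hMF : ∀ s ∈ K, |F s| ≤ M := fun s hs => le_trans (hM₀ s hs) (le_max_left _ _)
  set L : ℝ := max 1 M with hLdef
  have hL1 : (1 : ℝ) ≤ L := le_max_left _ _
  have hL0 : 0 ≤ L := le_trans zero_le_one hL1
  have hML : M ≤ L := le_max_right _ _
  set δ₀ : ℝ := b' - t₀ with hδ₀def
  have hδ₀ : 0 < δ₀ := by simp [hδ₀def]; linarith
  have hEpos : 0 < (M + 1) * exp (L * δ₀) := by positivity
  set δ : ℝ := min δ₀ (1 / (6 * ((M + 1) * exp (L * δ₀)))) with hδdef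
  have hδpos : 0 < δ := lt_min hδ₀ (by positivity)
  have hδδ₀ : δ ≤ δ₀ := min_le_left _ _
  have hkey : M * exp (L * δ) * δ ≤ 1 / 6 := by
    have h1 : exp (L * δ) ≤ exp (L * δ₀) := exp_le_exp.2 (by nlinarith)
    have h2 : δ ≤ 1 / (6 * ((M + 1) * exp (L * δ₀))) := min_le_right _ _
    have h3 : M * exp (L * δ) * δ ≤ M * exp (L * δ₀) * (1 / (6 * ((M + 1) * exp (L * δ₀)))) := by
      apply mul_le_mul (mul_le_mul_of_nonneg_left h1 hM) h2 hδpos.le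
      positivity
    have h4 : M * exp (L * δ₀) * (1 / (6 * ((M + 1) * exp (L * δ₀)))) = M / (6 * (M + 1)) := by
      field_simp
    rw [h4] at h3
    have h5 : M / (6 * (M + 1)) ≤ 1 / 6 := by
      rw [div_le_div_iff₀ (by linarith) (by norm_num)]
      nlinarith
    linarith
  have hcneg : -(2 + δ) / δ < 0 := by
    have : 0 < (2 + δ) / δ := by positivity
    linarith [this, neg_div (δ) (2+δ)]
  clear hEpos
  clear_value δ
  clear hδdef
  clear_value M L δ₀ b' b
  refine ⟨-(2 + δ) / δ, hcneg, ?_⟩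
  intro φ φ' hφ hφ' hQ hPc
  set c : ℝ := -(2 + δ) / δ with hcdef
  clear_value c
  have hc : c < 0 := hcneg
  set Q : ℝ := φ t₀ with hQdef
  set P : ℝ := φ' t₀ with hPdef
  clear_value Q P
  have hPcQ : P < c * Q := (div_lt_iff₀ hQ).1 hPc
  have hPneg : P < 0 := lt_of_lt_of_le hPcQ (by nlinarith)
  set d : ℝ := t₀ + δ with hddef
  clear_value d
  have ht₀d : t₀ < d := by rw [hddef]; linarith
  have hdb' : d ≤ b' := by rw [hddef]; rw [hδ₀def] at hδδ₀; linarith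
  have hIK : Icc t₀ d ⊆ K := Icc_subset_Icc le_rfl hdb'
  have hIJ : Icc t₀ d ⊆ {t : ℝ | 0 ≤ t ∧ (t : EReal) < T} := fun s hs => hKJ (hIK hs)
  -- the pair function
  set fp : ℝ → ℝ × ℝ := fun t => (φ t, φ' t) with hfpdef
  have hφcont : ContinuousOn φ (Icc t₀ d) := fun t ht =>
    ((hφ t (hIJ ht)).continuousWithinAt).mono hIJ
  have hφ'cont : ContinuousOn φ' (Icc t₀ d) := fun t ht =>
    ((hφ' t (hIJ ht)).continuousWithinAt).mono hIJ
  have hcont : ContinuousOn fp (Icc t₀ d) := hφcont.prodMk hφ'cont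
  have hnhds : ∀ t ∈ Ico t₀ d, {s : ℝ | 0 ≤ s ∧ (s : EReal) < T} ∈ nhdsWithin t (Ici t) := by
    intro t ht
    apply mem_nhdsWithin.2
    refine ⟨Iio b, isOpen_Iio, lt_of_lt_of_le (lt_of_lt_of_le ht.2 hdb') hb'b.le, ?_⟩
    rintro s ⟨hs1, hs2⟩
    exact ⟨le_trans ht₀0 (le_trans ht.1 hs2),
      lt_of_lt_of_le (EReal.coe_lt_coe_iff.2 hs1) hbT⟩
  have hderiv : ∀ t ∈ Ico t₀ d, HasDerivWithinAt fp (φ' t, F t * φ t) (Ici t) t := by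
    intro t ht
    have htJ : t ∈ {s : ℝ | 0 ≤ s ∧ (s : EReal) < T} := hIJ (Ico_subset_Icc_self ht)
    exact ((hφ t htJ).mono_of_mem_nhdsWithin (hnhds t ht)).prodMk
      ((hφ' t htJ).mono_of_mem_nhdsWithin (hnhds t ht))
  have hbound : ∀ t ∈ Ico t₀ d, ‖(φ' t, F t * φ t)‖ ≤ L * ‖fp t‖ + 0 := by
    intro t ht
    rw [add_zero]
    have hfpn : ‖fp t‖ = max |φ t| |φ' t| := by
      simp [hfpdef, Prod.norm_def, Real.norm_eq_abs]
    have hn : ‖((φ' t, F t * φ t) : ℝ × ℝ)‖ = max |φ' t| (|F t| * |φ t|) := by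
      simp [Prod.norm_def, Real.norm_eq_abs, abs_mul]
    rw [hn, hfpn]
    have h0 : (0:ℝ) ≤ max |φ t| |φ' t| := le_trans (abs_nonneg _) (le_max_left _ _)
    apply max_le
    · calc |φ' t| ≤ max |φ t| |φ' t| := le_max_right _ _
        _ = 1 * max |φ t| |φ' t| := (one_mul _).symm
        _ ≤ L * max |φ t| |φ' t| := mul_le_mul_of_nonneg_right hL1 h0
    · calc |F t| * |φ t|
        _ ≤ M * max |φ t| |φ' t| :=
          mul_le_mul (hMF t (hIK (Ico_subset_Icc_self ht))) (le_max_left _ _) (abs_nonneg _) hM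
        _ ≤ L * max |φ t| |φ' t| := mul_le_mul_of_nonneg_right hML h0
  have hgron := norm_le_gronwallBound_of_norm_deriv_right_le hcont hderiv
    (le_refl ‖fp t₀‖) hbound
  have hCQP : ‖fp t₀‖ ≤ Q - P := by
    have h9 : ‖fp t₀‖ = max |Q| |P| := by
      simp only [hfpdef, Prod.norm_def, Real.norm_eq_abs]
      rw [← hQdef, ← hPdef]
    rw [h9]
    apply max_le
    · rw [abs_of_pos hQ]; linarith
    · rw [abs_of_neg hPneg]; linarith
  set B : ℝ := M * ((Q - P) * exp (L * δ)) with hBdef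
  clear_value B
  have hQP : 0 < Q - P := by linarith
  have hB0 : 0 ≤ B := by rw [hBdef]; positivity
  have hfb : ∀ t ∈ Icc t₀ d, ‖fp t‖ ≤ (Q - P) * exp (L * δ) := by
    intro t ht
    have h1 := hgron t ht
    rw [gronwallBound_ε0] at h1
    have h2 : exp (L * (t - t₀)) ≤ exp (L * δ) := by
      apply exp_le_exp.2
      have h3 : t - t₀ ≤ δ := by simp [hddef] at ht; linarith [ht.2]
      have h4 : t₀ ≤ t := ht.1
      nlinarith [hL0]
    calc ‖fp t‖ ≤ ‖fp t₀‖ * exp (L * (t - t₀)) := h1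
      _ ≤ (Q - P) * exp (L * δ) :=
        mul_le_mul hCQP h2 (exp_pos _).le (by linarith)
  have hB : ∀ t ∈ Icc t₀ d, ‖F t * φ t‖ ≤ B := by
    intro t ht
    have hφb : |φ t| ≤ ‖fp t‖ := by
      have : ‖fp t‖ = max |φ t| |φ' t| := by simp [hfpdef, Prod.norm_def, Real.norm_eq_abs]
      rw [this]; exact le_max_left _ _
    calc ‖F t * φ t‖ = |F t| * |φ t| := abs_mul _ _
      _ ≤ M * ((Q - P) * exp (L * δ)) :=
        mul_le_mul (hMF t (hIK ht)) (le_trans hφb (hfb t ht)) (abs_nonneg _) hM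
      _ = B := hBdef.symm
  -- first MVT bound: |φ' t - P| ≤ B * (t - t₀)
  have hφ'd : ∀ t ∈ Icc t₀ d, HasDerivWithinAt φ' (F t * φ t) (Icc t₀ d) t :=
    fun t ht => (hφ' t (hIJ ht)).mono hIJ
  have hseg1 := norm_image_sub_le_of_norm_deriv_le_segment' hφ'd
    (fun t ht => hB t (Ico_subset_Icc_self ht))
  -- second MVT on h t = φ t - P * t
  have hhd : ∀ t ∈ Icc t₀ d, HasDerivWithinAt (fun s => φ s - P * s) (φ' t - P) (Icc t₀ d) t := by
    intro t ht
    have h1 : HasDerivWithinAt (fun s => P * s) (P * 1) (Icc t₀ d) t :=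
      (hasDerivWithinAt_id t _).const_mul P
    have h2 := ((hφ t (hIJ ht)).mono hIJ).sub h1
    rw [mul_one] at h2
    exact h2
  have hseg2 := norm_image_sub_le_of_norm_deriv_le_segment' hhd
    (C := B * δ) ?bnd
  case bnd =>
    intro t ht
    have h1 := hseg1 t (Ico_subset_Icc_self ht)
    have h2 : t - t₀ ≤ δ := by
      have := ht.2.le
      rw [hddef] at this
      linarith
    rw [Real.norm_eq_abs] at h1 ⊢
    rw [hPdef]
    calc |φ' t - φ' t₀| ≤ B * (t - t₀) := h1
      _ ≤ B * δ := mul_le_mul_of_nonneg_left h2 hB0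
  have hfinal := hseg2 d (right_mem_Icc.2 ht₀d.le)
  rw [Real.norm_eq_abs] at hfinal
  have hφd : φ d ≤ Q + P * δ + B * δ ^ 2 := by
    rw [hQdef]
    have h1 : φ d - P * d - (φ t₀ - P * t₀) ≤ B * δ * (d - t₀) := le_of_abs_le hfinal
    have h2 : d - t₀ = δ := by simp [hddef]
    rw [h2] at h1
    have h3 : P * d - P * t₀ = P * δ := by rw [hddef]; ring
    have h4 : B * δ * δ = B * δ ^ 2 := by ring
    linarith [h1, h3, h4]
  have hφdneg : φ d < 0 := by
    have h1 : B * δ ^ 2 ≤ (1 / 6) * ((Q - P) * δ) := by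
      have := mul_le_mul_of_nonneg_right hkey (mul_nonneg hQP.le hδpos.le)
      calc B * δ ^ 2 = (M * exp (L * δ) * δ) * ((Q - P) * δ) := by rw [hBdef]; ring
        _ ≤ (1 / 6) * ((Q - P) * δ) := this
    have h2 : P * δ < -(2 + δ) * Q := by
      have h5 := mul_lt_mul_of_pos_right hPcQ hδpos
      have h6 : c * Q * δ = -(2 + δ) * Q := by
        rw [hcdef]; field_simp
      linarith [h5, h6]
    have e1 : (Q - P) * δ = Q * δ - P * δ := by ring
    have e2 : 0 < Q * δ := mul_pos hQ hδpos
    linarith [hφd, h1, h2, e1, e2]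
  -- IVT
  have hIVT := intermediate_value_Icc' ht₀d.le hφcont
  have h0mem : (0 : ℝ) ∈ Icc (φ d) (φ t₀) := ⟨hφdneg.le, by rw [← hQdef]; exact hQ.le⟩
  obtain ⟨ts, hts, hts0⟩ := hIVT h0mem
  refine ⟨ts, hIJ hts, ?_, hts0⟩
  rcases lt_or_eq_of_le hts.1 with h | h
  · exact h
  · exfalso; rw [← h] at hts0; rw [hQdef, hts0] at hQ; exact lt_irrefl 0 hQ
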